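/- The isotropy group of the Bell state |φ⁺⟩ = (|00⟩ + |11⟩)/√2 under the projective action g ↦ U(g)⊗U(g) of SU(2) is exactly {(iZ)^α e^{iθY} : θ ∈ [0,2π), α ∈ {0,1,2,3}}, i.e. U ∈ SU(2) satisfies U ⊗ U |φ⁺⟩⟨φ⁺| U† ⊗ U† = |φ⁺⟩⟨φ⁺| if and only if U is of this form. -/

import Mathlib

open Matrix Kronecker

/-- Pauli matrix `Y`. -/
noncomputable def pauliY : Matrix (Fin 2) (Fin 2) ℂ := !![0, -Complex.I; Complex.I, 0]

/-- Pauli matrix `Z`. -/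
noncomputable def pauliZ : Matrix (Fin 2) (Fin 2) ℂ := !![1, 0; 0, -1]

/-- `e^{iθY} = cos θ · 𝟙 + i sin θ · Y` (since `Y² = 𝟙`). -/
noncomputable def expIY (θ : ℝ) : Matrix (Fin 2) (Fin 2) ℂ :=
  (Real.cos θ : ℂ) • (1 : Matrix (Fin 2) (Fin 2) ℂ)
    + ((Real.sin θ : ℂ) * Complex.I) • pauliY

/-- The Bell state `|φ⁺⟩ = (|00⟩ + |11⟩)/√2`. -/
noncomputable def phiPlus : (Fin 2 × Fin 2) → ℂ := fun p =>
  if p.1 = p.2 then (Real.sqrt 2 : ℂ)⁻¹ else 0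

/-- The projector `|φ⁺⟩⟨φ⁺|`. -/
noncomputable def phiPlusProj : Matrix (Fin 2 × Fin 2) (Fin 2 × Fin 2) ℂ :=
  Matrix.vecMulVec phiPlus (star phiPlus)

/-- The isotropy group of `|φ⁺⟩⟨φ⁺|` under the action
`ρ ↦ (U⊗U) ρ (U⊗U)†` of `SU(2)` is exactly
`{(iZ)^α e^{iθY} : θ ∈ [0,2π), α ∈ {0,1,2,3}}`. -/

lemma expIY_eq (θ : ℝ) : expIY θ =
    !![(Real.cos θ : ℂ), (Real.sin θ : ℂ); -(Real.sin θ : ℂ), (Real.cos θ : ℂ)] := by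
  ext i j
  fin_cases i <;> fin_cases j <;>
    simp [expIY, pauliY, Matrix.one_apply] <;> ring_nf <;>
    simp [Complex.I_sq]

lemma hWt : (Complex.I • pauliZ)ᵀ = Complex.I • pauliZ := by
  ext i j; fin_cases i <;> fin_cases j <;> simp [pauliZ]

lemma hWH : (Complex.I • pauliZ)ᴴ = -(Complex.I • pauliZ) := by
  ext i j; fin_cases i <;> fin_cases j <;> simp [pauliZ]

lemma hW2 : (Complex.I • pauliZ) * (Complex.I • pauliZ) = -1 := by
  ext i j; fin_cases i <;> fin_cases j <;>
    simp [pauliZ, Matrix.mul_apply, Fin.sum_univ_two, Matrix.one_apply, Complex.I_sq]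

lemma hWdet : (Complex.I • pauliZ).det = 1 := by
  simp [pauliZ, Matrix.det_fin_two, Complex.I_sq]

lemma rot_orth (θ : ℝ) : expIY θ * (expIY θ)ᵀ = 1 := by
  have key : Complex.cos θ ^ 2 + Complex.sin θ ^ 2 = 1 := Complex.cos_sq_add_sin_sq θ
  rw [expIY_eq]
  ext i j
  fin_cases i <;> fin_cases j <;>
    simp [Matrix.mul_apply, Fin.sum_univ_two, Matrix.transpose_apply, Matrix.one_apply,
      Matrix.vecHead, Matrix.vecTail] <;>
    first
    | linear_combination key
    | ring

lemma exists_theta (x y : ℝ) (h : x ^ 2 + y ^ 2 = 1) :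
    ∃ θ : ℝ, 0 ≤ θ ∧ θ < 2 * Real.pi ∧ Real.cos θ = x ∧ Real.sin θ = y := by
  set z : ℂ := ⟨x, y⟩ with hz
  have habs : ‖z‖ = 1 := by
    rw [Complex.norm_def, hz, Complex.normSq_mk, show x * x + y * y = 1 by nlinarith]
    exact Real.sqrt_one
  have hz0 : z ≠ 0 := by
    intro h0; rw [h0] at habs; simp at habs
  have hcos : Real.cos z.arg = x := by
    rw [Complex.cos_arg hz0, habs]; simp [hz]
  have hsin : Real.sin z.arg = y := by
    rw [Complex.sin_arg, habs]; simp [hz]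
  by_cases hge : 0 ≤ z.arg
  · exact ⟨z.arg, hge, lt_of_le_of_lt (Complex.arg_le_pi z)
      (by nlinarith [Real.pi_pos]), hcos, hsin⟩
  · refine ⟨z.arg + 2 * Real.pi, ?_, ?_, ?_, ?_⟩
    · nlinarith [Complex.neg_pi_lt_arg z, Real.pi_pos]
    · nlinarith [not_le.mp hge]
    · rw [Real.cos_add_two_pi]; exact hcos
    · rw [Real.sin_add_two_pi]; exact hsin

lemma exists_rot (U : Matrix (Fin 2) (Fin 2) ℂ) (hdet : U.det = 1)
    (hU : U * Uᴴ = 1) (hM : U * Uᵀ = 1) :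
    ∃ θ : ℝ, 0 ≤ θ ∧ θ < 2 * Real.pi ∧ U = expIY θ := by
  have hTU : Uᵀ * U = 1 := mul_eq_one_comm.mp hM
  have hTH : Uᵀ = Uᴴ := by
    calc Uᵀ = Uᵀ * (U * Uᴴ) := by rw [hU, mul_one]
    _ = (Uᵀ * U) * Uᴴ := by rw [mul_assoc]
    _ = Uᴴ := by rw [hTU, one_mul]
  have hreal : ∀ i j, U i j = (starRingEnd ℂ) (U i j) := by
    intro i j
    have := congrFun (congrFun hTH j) i
    simpa [Matrix.transpose_apply, Matrix.conjTranspose_apply] using this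
  set a := U 0 0; set b := U 0 1; set c := U 1 0; set d := U 1 1
  have e1 : a * a + b * b = 1 := by
    have := congrFun (congrFun hM 0) 0
    simpa [Matrix.mul_apply, Fin.sum_univ_two, Matrix.one_apply] using this
  have e2 : a * c + b * d = 0 := by
    have := congrFun (congrFun hM 0) 1
    simpa [Matrix.mul_apply, Fin.sum_univ_two, Matrix.one_apply] using this
  have e3 : a * d - b * c = 1 := by
    rw [Matrix.det_fin_two] at hdet; exact hdet
  have hc : c = -b := by linear_combination -(c * e1 + b * e3 - a * e2)
  have hd : d = a := by linear_combination -(d * e1 - b * e2 - a * e3)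
  have ha : a = ((a.re : ℝ) : ℂ) := (Complex.conj_eq_iff_re.mp (hreal 0 0).symm).symm
  have hb : b = ((b.re : ℝ) : ℂ) := (Complex.conj_eq_iff_re.mp (hreal 0 1).symm).symm
  have e1' : ((a.re : ℂ)) * a.re + ((b.re : ℂ)) * b.re = 1 := by rw [← ha, ← hb]; exact e1
  have hxy : a.re ^ 2 + b.re ^ 2 = 1 := by
    have h' : ((a.re ^ 2 + b.re ^ 2 : ℝ) : ℂ) = 1 := by push_cast; linear_combination e1'
    exact_mod_cast h'
  obtain ⟨θ, h0, h2p, hcx, hsy⟩ := exists_theta a.re b.re hxy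
  refine ⟨θ, h0, h2p, ?_⟩
  rw [expIY_eq, hcx, hsy]
  ext i j
  fin_cases i <;> fin_cases j <;> simp
  · exact ha
  · exact hb
  · rw [show U 1 0 = c from rfl, hc, hb]; simp
  · rw [show U 1 1 = d from rfl, hd, ha]; simp

lemma conj_entry (U : Matrix (Fin 2) (Fin 2) ℂ) (i j k l : Fin 2) :
    (((U ⊗ₖ U) * phiPlusProj * (U ⊗ₖ U)ᴴ)) (i,j) (k,l)
      = (2:ℂ)⁻¹ * ((U*Uᵀ) i j) * (starRingEnd ℂ) ((U*Uᵀ) k l) := by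
  have h2 : ((Real.sqrt 2 : ℂ))⁻¹ * ((Real.sqrt 2 : ℂ))⁻¹ = (2:ℂ)⁻¹ := by
    rw [← mul_inv]
    norm_num [← Complex.ofReal_mul, Real.mul_self_sqrt]
  simp [Matrix.mul_apply, phiPlusProj, Matrix.vecMulVec_apply, phiPlus,
    kroneckerMap_apply, Matrix.conjTranspose_apply, Fintype.sum_prod_type,
    Fin.sum_univ_two, Matrix.transpose_apply, Matrix.mul_apply, _root_.map_mul]
  ring_nf
  simp only [sq, h2]; ring

lemma proj_entry (i j k l : Fin 2) :
    phiPlusProj (i,j) (k,l)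
      = (2:ℂ)⁻¹ * ((1 : Matrix (Fin 2) (Fin 2) ℂ) i j)
          * (starRingEnd ℂ) ((1 : Matrix (Fin 2) (Fin 2) ℂ) k l) := by
  have h2 : ((Real.sqrt 2 : ℂ))⁻¹ * ((Real.sqrt 2 : ℂ))⁻¹ = (2:ℂ)⁻¹ := by
    rw [← mul_inv]
    norm_num [← Complex.ofReal_mul, Real.mul_self_sqrt]
  simp only [phiPlusProj, Matrix.vecMulVec_apply, phiPlus, Pi.star_apply,
    Matrix.one_apply]
  split_ifs <;> simp [← h2] <;> ring

lemma cond_iff (U : Matrix (Fin 2) (Fin 2) ℂ) (hdet : U.det = 1) :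
    (U ⊗ₖ U) * phiPlusProj * (U ⊗ₖ U)ᴴ = phiPlusProj
      ↔ U * Uᵀ = 1 ∨ U * Uᵀ = -1 := by
  constructor
  · intro h
    set M := U * Uᵀ with hMdef
    have key : ∀ i j k l : Fin 2, M i j * (starRingEnd ℂ) (M k l)
        = (1 : Matrix (Fin 2) (Fin 2) ℂ) i j
          * (starRingEnd ℂ) ((1 : Matrix (Fin 2) (Fin 2) ℂ) k l) := by
      intro i j k l
      have h' := congrFun (congrFun h (i,j)) (k,l)
      rw [conj_entry, proj_entry] at h'
      have h2 : (2:ℂ)⁻¹ ≠ 0 := by norm_num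
      field_simp at h'
      linear_combination h'
    have h00 : M 0 0 * (starRingEnd ℂ) (M 0 0) = 1 := by
      simpa [Matrix.one_apply_eq] using key 0 0 0 0
    have h01 : M 0 1 * (starRingEnd ℂ) (M 0 0) = 0 := by
      simpa [Matrix.one_apply_eq,
        Matrix.one_apply_ne (show (0:Fin 2) ≠ 1 by decide)] using key 0 1 0 0
    have h10 : M 1 0 * (starRingEnd ℂ) (M 0 0) = 0 := by
      simpa [Matrix.one_apply_eq,
        Matrix.one_apply_ne (show (1:Fin 2) ≠ 0 by decide)] using key 1 0 0 0
    have h11 : M 1 1 * (starRingEnd ℂ) (M 0 0) = 1 := by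
      simpa [Matrix.one_apply_eq] using key 1 1 0 0
    have hc0 : (starRingEnd ℂ) (M 0 0) ≠ 0 := by
      intro h0; rw [h0, mul_zero] at h00; simp at h00
    have hm01 : M 0 1 = 0 := by
      rcases mul_eq_zero.mp h01 with h' | h'
      · exact h'
      · exact absurd h' hc0
    have hm10 : M 1 0 = 0 := by
      rcases mul_eq_zero.mp h10 with h' | h'
      · exact h'
      · exact absurd h' hc0
    have heq : M 0 0 = M 1 1 := mul_right_cancel₀ hc0 (h00.trans h11.symm)
    have hdetM : M.det = 1 := by
      rw [hMdef, Matrix.det_mul, Matrix.det_transpose, hdet, mul_one]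
    rw [Matrix.det_fin_two, hm01, hm10, ← heq] at hdetM
    have : M 0 0 * M 0 0 = 1 := by linear_combination hdetM
    rcases mul_self_eq_one_iff.mp this with h1 | h1
    · left; ext i j
      fin_cases i <;> fin_cases j <;>
        simp [Matrix.one_apply, h1, hm01, hm10, ← heq]
    · right; ext i j
      fin_cases i <;> fin_cases j <;>
        simp [Matrix.one_apply, h1, hm01, hm10, ← heq]
  · intro h
    ext ⟨i,j⟩ ⟨k,l⟩
    rw [conj_entry, proj_entry]
    rcases h with h | h <;> rw [h] <;>
      simp only [Matrix.neg_apply, Matrix.one_apply, map_neg, apply_ite (starRingEnd ℂ),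
        _root_.map_one, _root_.map_zero] <;> split_ifs <;> ring

theorem iso_phiPlus :
    {U : Matrix.specialUnitaryGroup (Fin 2) ℂ |
        ((U : Matrix (Fin 2) (Fin 2) ℂ) ⊗ₖ (U : Matrix (Fin 2) (Fin 2) ℂ)) * phiPlusProj *
          ((U : Matrix (Fin 2) (Fin 2) ℂ) ⊗ₖ (U : Matrix (Fin 2) (Fin 2) ℂ))ᴴ = phiPlusProj}
      = {U : Matrix.specialUnitaryGroup (Fin 2) ℂ |
          ∃ (θ : ℝ) (α : Fin 4), 0 ≤ θ ∧ θ < 2 * Real.pi ∧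
            (U : Matrix (Fin 2) (Fin 2) ℂ)
              = (Complex.I • pauliZ) ^ (α : ℕ) * expIY θ} := by
  ext U
  simp only [Set.mem_setOf_eq]
  obtain ⟨hUu, hUdet⟩ := Matrix.mem_specialUnitaryGroup_iff.mp U.2
  have hUU : (U : Matrix (Fin 2) (Fin 2) ℂ) * (U : Matrix (Fin 2) (Fin 2) ℂ)ᴴ = 1 := by
    have h := Matrix.mem_unitaryGroup_iff.mp hUu
    rwa [Matrix.star_eq_conjTranspose] at h
  set W : Matrix (Fin 2) (Fin 2) ℂ := Complex.I • pauliZ with hWdef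
  have hWWH : W * Wᴴ = 1 := by rw [hWH, mul_neg, hW2, neg_neg]
  have hWHW : Wᴴ * W = 1 := by rw [hWH, neg_mul, hW2, neg_neg]
  constructor
  · intro h
    rcases (cond_iff _ hUdet).mp h with hM | hM
    · obtain ⟨θ, h0, h2, hE⟩ := exists_rot _ hUdet hUU hM
      exact ⟨θ, 0, h0, h2, by simpa using hE⟩
    · set V : Matrix (Fin 2) (Fin 2) ℂ := Wᴴ * (U : Matrix (Fin 2) (Fin 2) ℂ) with hVdef
      have hVdet : V.det = 1 := by
        rw [hVdef, Matrix.det_mul, Matrix.det_conjTranspose, hWdet, hUdet]; simp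
      have hVU : V * Vᴴ = 1 := by
        have hx : V * Vᴴ = Wᴴ * ((U : Matrix (Fin 2) (Fin 2) ℂ)
            * (U : Matrix (Fin 2) (Fin 2) ℂ)ᴴ) * W := by
          rw [hVdef, Matrix.conjTranspose_mul, Matrix.conjTranspose_conjTranspose]
          noncomm_ring
        rw [hx, hUU, mul_one, hWHW]
      have hVM : V * Vᵀ = 1 := by
        have hx : V * Vᵀ = Wᴴ * ((U : Matrix (Fin 2) (Fin 2) ℂ)
            * (U : Matrix (Fin 2) (Fin 2) ℂ)ᵀ) * (Wᴴ)ᵀ := by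
          rw [hVdef, Matrix.transpose_mul]
          noncomm_ring
        rw [hx, hM, hWH, Matrix.transpose_neg, hWt]
        have h3 : (-W) * (-1 : Matrix (Fin 2) (Fin 2) ℂ) * (-W) = -(W * W) := by
          noncomm_ring
        rw [h3, hW2, neg_neg]
      obtain ⟨θ, h0, h2, hE⟩ := exists_rot V hVdet hVU hVM
      have hUV : (U : Matrix (Fin 2) (Fin 2) ℂ) = W * V := by
        rw [hVdef, ← mul_assoc, hWWH, one_mul]
      refine ⟨θ, 1, h0, h2, ?_⟩
      rw [hUV, hE]
      norm_num
  · rintro ⟨θ, α, h0, h2, hE⟩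
    apply (cond_iff _ hUdet).mpr
    rw [hE]
    have hMall : (W ^ (α:ℕ) * expIY θ) * (W ^ (α:ℕ) * expIY θ)ᵀ
        = (-1 : Matrix (Fin 2) (Fin 2) ℂ) ^ (α:ℕ) := by
      rw [Matrix.transpose_mul, Matrix.transpose_pow, hWt]
      calc W ^ (α:ℕ) * expIY θ * ((expIY θ)ᵀ * W ^ (α:ℕ))
          = W ^ (α:ℕ) * (expIY θ * (expIY θ)ᵀ) * W ^ (α:ℕ) := by noncomm_ring
        _ = W ^ (α:ℕ) * W ^ (α:ℕ) := by rw [rot_orth, mul_one]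
        _ = (W * W) ^ (α:ℕ) := by
            rw [← pow_add, ← two_mul, pow_mul, sq]
        _ = (-1 : Matrix (Fin 2) (Fin 2) ℂ) ^ (α:ℕ) := by rw [hW2]
    rw [hMall]
    fin_cases α <;> norm_num
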